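/- Let φ : ℝ² → E be a C² two-parameter family of points of E, and let T, Y_1, …, Y_p : ℝ → ℝ be differentiable functions such that for every λ₁ ∈ ℝ, the point φ(λ₁, 0) satisfies the first law with temperature T(λ₁) and potentials Y_1(λ₁), …, Y_p(λ₁). Then for every λ₁, evaluating at the point φ(λ₁, 0): B_{φ(λ₁,0)}(∂φ/∂λ₁, ∂φ/∂λ₂) = T′(λ₁)·DS_{φ(λ₁,0)}(∂φ/∂λ₂) + Σ_{i=1}^p Y_i′(λ₁)·DX^i_{φ(λ₁,0)}(∂φ/∂λ₂), where the partial derivatives of φ are evaluated at (λ₁, 0). -/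

import Mathlib

open Filter Topology

/-- The second Fréchet derivative of `f : E → ℝ` at `φ`, applied to `u`, `v`. -/
noncomputable def D2 {E : Type*} [NormedAddCommGroup E] [NormedSpace ℝ E]
    (f : E → ℝ) (φ u v : E) : ℝ :=
  fderiv ℝ (fderiv ℝ f) φ u v

/-- `φ` satisfies the first law with temperature `T` and potentials `Y i`:
`DM_φ = T·DS_φ + ∑ i, Y i · DX^i_φ` as continuous linear functionals. -/
def FirstLaw {E : Type*} [NormedAddCommGroup E] [NormedSpace ℝ E] {p : ℕ}
    (M S : E → ℝ) (X : Fin p → E → ℝ) (φ : E) (T : ℝ) (Y : Fin p → ℝ) : Prop :=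
  fderiv ℝ M φ = T • fderiv ℝ S φ + ∑ i, Y i • fderiv ℝ (X i) φ

/-- The canonical bilinear form
`B_φ(u,v) = D²M_φ(u,v) − T·D²S_φ(u,v) − ∑ i, Y i·D²X^i_φ(u,v)`. -/
noncomputable def Bform {E : Type*} [NormedAddCommGroup E] [NormedSpace ℝ E] {p : ℕ}
    (M S : E → ℝ) (X : Fin p → E → ℝ) (φ : E) (T : ℝ) (Y : Fin p → ℝ) (u v : E) : ℝ :=
  D2 M φ u v - T * D2 S φ u v - ∑ i, Y i * D2 (X i) φ u v

/-- Along a C² two-parameter family `φ(λ₁, λ₂)` whose slice `λ₂ = 0` consists of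
points satisfying the first law with temperature `T(λ₁)` and potentials `Y i (λ₁)`, one has
`B(∂₁φ, ∂₂φ) = T′(λ₁)·DS(∂₂φ) + ∑ i, Y i′(λ₁)·DX^i(∂₂φ)` at every `(λ₁, 0)`. -/
theorem turning_point_lemma
    {E : Type*} [NormedAddCommGroup E] [NormedSpace ℝ E] [CompleteSpace E]
    {p : ℕ} (M S : E → ℝ) (X : Fin p → E → ℝ)
    (hM : ContDiff ℝ (⊤ : ℕ∞) M) (hS : ContDiff ℝ (⊤ : ℕ∞) S)
    (hX : ∀ i, ContDiff ℝ (⊤ : ℕ∞) (X i))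
    (φ : ℝ × ℝ → E) (hφ : ContDiff ℝ 2 φ)
    (T : ℝ → ℝ) (Y : Fin p → ℝ → ℝ)
    (hT : Differentiable ℝ T) (hY : ∀ i, Differentiable ℝ (Y i))
    (hfl : ∀ l₁ : ℝ, FirstLaw M S X (φ (l₁, 0)) (T l₁) (fun i => Y i l₁)) :
    ∀ l₁ : ℝ,
      Bform M S X (φ (l₁, 0)) (T l₁) (fun i => Y i l₁)
        (fderiv ℝ φ (l₁, 0) (1, 0)) (fderiv ℝ φ (l₁, 0) (0, 1)) =
      deriv T l₁ * fderiv ℝ S (φ (l₁, 0)) (fderiv ℝ φ (l₁, 0) (0, 1)) +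
      ∑ i, deriv (Y i) l₁ * fderiv ℝ (X i) (φ (l₁, 0)) (fderiv ℝ φ (l₁, 0) (0, 1)) := by
  intro a
  set ψ : E := φ (a, 0) with hψ
  set u : E := fderiv ℝ φ (a, 0) (1, 0) with hu
  set v : E := fderiv ℝ φ (a, 0) (0, 1) with hv
  have hγa : HasDerivAt (fun t : ℝ => φ (t, 0)) u a := by
    have h1 : HasFDerivAt φ (fderiv ℝ φ (a, 0)) (a, 0) :=
      (hφ.differentiable (by norm_num) _).hasFDerivAt
    have h2 : HasDerivAt (fun t : ℝ => ((t, 0) : ℝ × ℝ)) ((1 : ℝ), (0 : ℝ)) a := by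
      simpa using (hasDerivAt_id a).prodMk (hasDerivAt_const a (0 : ℝ))
    exact h1.comp_hasDerivAt a h2
  have key : ∀ (f : E → ℝ), ContDiff ℝ (⊤ : ℕ∞) f →
      HasDerivAt (fun t : ℝ => fderiv ℝ f (φ (t, 0)))
        ((fderiv ℝ (fderiv ℝ f) ψ) u) a := by
    intro f hf
    have hd : Differentiable ℝ (fderiv ℝ f) :=
      (contDiff_infty_iff_fderiv.mp hf).2.differentiable (by simp)
    have h1 : HasFDerivAt (fderiv ℝ f) (fderiv ℝ (fderiv ℝ f) ψ) ψ :=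
      (hd ψ).hasFDerivAt
    exact h1.comp_hasDerivAt a hγa
  have hMcurve := key M hM
  have hScurve := key S hS
  have hRHS : HasDerivAt (fun t : ℝ => fderiv ℝ M (φ (t, 0)))
      ((T a • (fderiv ℝ (fderiv ℝ S) ψ u) + deriv T a • fderiv ℝ S ψ) +
        ∑ i, (Y i a • (fderiv ℝ (fderiv ℝ (X i)) ψ u) +
          deriv (Y i) a • fderiv ℝ (X i) ψ)) a := by
    have h1 : HasDerivAt (fun t : ℝ => T t • fderiv ℝ S (φ (t, 0)))
        (T a • (fderiv ℝ (fderiv ℝ S) ψ u) + deriv T a • fderiv ℝ S ψ) a :=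
      (hT a).hasDerivAt.smul hScurve
    have h2 : HasDerivAt
        (fun t : ℝ => ∑ i, Y i t • fderiv ℝ (X i) (φ (t, 0)))
        (∑ i, (Y i a • (fderiv ℝ (fderiv ℝ (X i)) ψ u) +
          deriv (Y i) a • fderiv ℝ (X i) ψ)) a :=
      HasDerivAt.fun_sum fun i _ => ((hY i) a).hasDerivAt.smul (key (X i) (hX i))
    have h3 := h1.add h2
    have hfun : (fun t : ℝ => fderiv ℝ M (φ (t, 0))) =
        (fun t : ℝ => T t • fderiv ℝ S (φ (t, 0)) +
          ∑ i, Y i t • fderiv ℝ (X i) (φ (t, 0))) := by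
      funext t
      exact hfl t
    rw [hfun]
    exact h3
  have heq := hMcurve.unique hRHS
  have happ := congrArg (fun L : E →L[ℝ] ℝ => L v) heq
  simp only [ContinuousLinearMap.add_apply, ContinuousLinearMap.smul_apply,
    ContinuousLinearMap.sum_apply, smul_eq_mul] at happ
  simp only [Bform, D2, Finset.sum_add_distrib] at happ ⊢
  rw [happ]
  ring_nf
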